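/- arXiv:2308.15409 — 3 statements merged into one kernel-verified Lean document; each statement's English description precedes it below -/
import Mathlib

section
/- Let V be a real inner product space and let w^0, w^1, ..., w^N ∈ V for N ≥ 2. Define the backward difference ∂_t^+ w^n = (w^n − w^{n-1})/Δt and the BDF2 difference D_t^{(2)} w^n = (3/2)∂_t^+ w^n − (1/2)∂_t^+ w^{n-1}, where Δt > 0. Then Δt·⟨∂_t^+ w^1, w^1⟩ + Δt·Σ_{n=2}^N ⟨D_t^{(2)} w^n, w^n⟩ ≥ (3/4)‖w^N‖² − (1/4)(‖w^{N-1}‖² + ‖w^1‖² + ‖w^0‖²). -/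
section aux
variable {V : Type*} [NormedAddCommGroup V] [InnerProductSpace ℝ V]

private lemma norm_sq_inner (x : V) : ‖x‖ ^ 2 = (inner ℝ x x : ℝ) :=
  (real_inner_self_eq_norm_sq x).symm

private lemma bdf2_term_eq (a b c : V) :
    (inner ℝ ((3 / 2 : ℝ) • (a - b) - (1 / 2 : ℝ) • (b - c)) a : ℝ)
      = (1/4) * (‖a‖ ^ 2 + ‖(2:ℝ) • a - b‖ ^ 2)
        - (1/4) * (‖b‖ ^ 2 + ‖(2:ℝ) • b - c‖ ^ 2)
        + (1/4) * ‖a - (2:ℝ) • b + c‖ ^ 2 := by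
  simp only [norm_sq_inner, inner_sub_left, inner_sub_right, inner_add_left, inner_add_right,
    real_inner_smul_left, real_inner_smul_right, real_inner_comm b a, real_inner_comm c a,
    real_inner_comm c b]
  ring

private lemma bdf1_term_eq (a b : V) :
    (inner ℝ (a - b) a : ℝ)
      = (1/4) * (‖a‖ ^ 2 + ‖(2:ℝ) • a - b‖ ^ 2) - (1/4) * ‖a‖ ^ 2 - (1/4) * ‖b‖ ^ 2 := by
  simp only [norm_sq_inner, inner_sub_left, inner_sub_right,
    real_inner_smul_left, real_inner_smul_right, real_inner_comm b a]
  ring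

private lemma two_smul_sub_sq (a b : V) :
    ‖(2:ℝ) • a - b‖ ^ 2 ≥ 2 * ‖a‖ ^ 2 - ‖b‖ ^ 2 := by
  have h : (inner ℝ a b : ℝ) ≤ ‖a‖ * ‖b‖ := real_inner_le_norm a b
  have e : ‖(2:ℝ) • a - b‖ ^ 2 = 4 * ‖a‖ ^ 2 - 4 * (inner ℝ a b : ℝ) + ‖b‖ ^ 2 := by
    simp only [norm_sq_inner, inner_sub_left, inner_sub_right,
      real_inner_smul_left, real_inner_smul_right, real_inner_comm b a]
    ring
  nlinarith [sq_nonneg (‖a‖ - ‖b‖)]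

private lemma bdf2_ind (w : ℕ → V) :
    ∀ N, 1 ≤ N →
    (inner ℝ (w 1 - w 0) (w 1) : ℝ)
      + ∑ n ∈ Finset.Icc 2 N,
          (inner ℝ ((3 / 2 : ℝ) • (w n - w (n - 1)) - (1 / 2 : ℝ) • (w (n - 1) - w (n - 2))) (w n) : ℝ)
      ≥ (1/4) * (‖w N‖ ^ 2 + ‖(2:ℝ) • w N - w (N - 1)‖ ^ 2)
        - (1/4) * ‖w 1‖ ^ 2 - (1/4) * ‖w 0‖ ^ 2 := by
  intro N hN
  induction N with
  | zero => omega
  | succ N ih =>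
    rcases Nat.eq_or_lt_of_le hN with h1 | h1
    · -- N + 1 = 1
      have : N = 0 := by omega
      subst this
      simp [bdf1_term_eq (w 1) (w 0)]
    · have hN1 : 1 ≤ N := by omega
      have hsum := Finset.sum_Icc_succ_top (a := 2) (b := N) (by omega)
        (f := fun n => (inner ℝ ((3 / 2 : ℝ) • (w n - w (n - 1))
          - (1 / 2 : ℝ) • (w (n - 1) - w (n - 2))) (w n) : ℝ))
      rw [hsum]
      have h2 : N + 1 - 2 = N - 1 := by omega
      have h3 : N + 1 - 1 = N := by omega
      rw [h2, h3]
      have key := bdf2_term_eq (w (N + 1)) (w N) (w (N - 1))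
      have hpos : (0:ℝ) ≤ (1/4) * ‖w (N+1) - (2:ℝ) • w N + w (N - 1)‖ ^ 2 := by positivity
      have := ih hN1
      linarith

end aux

/-- BDF2 telescoping inequality:
    Δt⟨∂w¹,w¹⟩ + Δt Σ_{n=2}^N ⟨D²wⁿ, wⁿ⟩
      ≥ (3/4)‖w^N‖² − (1/4)(‖w^{N-1}‖² + ‖w¹‖² + ‖w⁰‖²). -/
theorem bdf2_sum_inequality
    {V : Type*} [NormedAddCommGroup V] [InnerProductSpace ℝ V]
    (N : ℕ) (hN : 2 ≤ N) (Δt : ℝ) (hΔt : 0 < Δt) (w : ℕ → V) :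
    Δt * (inner ℝ (Δt⁻¹ • (w 1 - w 0)) (w 1) : ℝ)
      + Δt * ∑ n ∈ Finset.Icc 2 N,
          (inner ℝ ((3 / 2 : ℝ) • (Δt⁻¹ • (w n - w (n - 1)))
                   - (1 / 2 : ℝ) • (Δt⁻¹ • (w (n - 1) - w (n - 2)))) (w n) : ℝ)
      ≥ (3 / 4) * ‖w N‖ ^ 2
        - (1 / 4) * (‖w (N - 1)‖ ^ 2 + ‖w 1‖ ^ 2 + ‖w 0‖ ^ 2) := by
  have hne : Δt ≠ 0 := ne_of_gt hΔt
  have h1 : Δt * (inner ℝ (Δt⁻¹ • (w 1 - w 0)) (w 1) : ℝ) = inner ℝ (w 1 - w 0) (w 1) := by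
    rw [real_inner_smul_left]; field_simp
  have h2 : ∀ n : ℕ,
      Δt * (inner ℝ ((3 / 2 : ℝ) • (Δt⁻¹ • (w n - w (n - 1)))
                   - (1 / 2 : ℝ) • (Δt⁻¹ • (w (n - 1) - w (n - 2)))) (w n) : ℝ)
      = (inner ℝ ((3 / 2 : ℝ) • (w n - w (n - 1)) - (1 / 2 : ℝ) • (w (n - 1) - w (n - 2))) (w n) : ℝ) := by
    intro n
    rw [smul_comm (3/2 : ℝ) Δt⁻¹, smul_comm (1/2 : ℝ) Δt⁻¹, ← smul_sub, real_inner_smul_left]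
    field_simp
  rw [h1, Finset.mul_sum]
  simp only [h2]
  have hind := bdf2_ind w N (by omega)
  have hsq := two_smul_sub_sq (w N) (w (N - 1))
  linarith
end

section
/- Let Q ∈ ℝ^{m×k}, Σ ∈ ℝ^{k×k}, R ∈ ℝ^{ℓ×k} with Q^T Q = I_k and R^T R = I_k, and let u ∈ ℝ^m with residual e = u − QQ^T u, p = |e| > 0, ẽ = e/p. Let Ȳ = [[Σ, Q^T u],[0, p]] ∈ ℝ^{(k+1)×(k+1)} and let Ȳ = Q̄ Σ̄ R̄^T be its full SVD. Then the updated triple Q' = [Q | ẽ]·Q̄, Σ' = Σ̄, R' = [[R,0],[0,1]]·R̄ satisfies Q' Σ' (R')^T = [Q Σ R^T | u] exactly, and Q', R' have orthonormal columns. -/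
open Matrix

/-- Exact rank-increasing incremental SVD update (no truncation): with
    Ȳ = [[Σ, Qᵀu],[0, p]] = Q̄ Σ̄ R̄ᵀ, the updated factors
    Q' = [Q | ẽ]Q̄, Σ' = Σ̄, R' = [[R,0],[0,1]]R̄ satisfy
    Q'Σ'(R')ᵀ = [QΣRᵀ | u], and Q', R' have orthonormal columns. -/
theorem isvd_update_exact
    (m k ℓ : ℕ)
    (Q : Matrix (Fin m) (Fin k) ℝ)
    (S : Matrix (Fin k) (Fin k) ℝ)
    (R : Matrix (Fin ℓ) (Fin k) ℝ)
    (hQ : Q.transpose * Q = 1) (hR : R.transpose * R = 1)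
    (u : Fin m → ℝ)
    (e : Fin m → ℝ) (he : e = u - Q.mulVec (Q.transpose.mulVec u))
    (p : ℝ) (hp : p = Real.sqrt (e ⬝ᵥ e)) (hppos : 0 < p)
    (et : Fin m → ℝ) (het : et = p⁻¹ • e)
    (Ybar : Matrix (Fin k ⊕ Unit) (Fin k ⊕ Unit) ℝ)
    (hY : Ybar = Matrix.fromBlocks S (Matrix.of fun i _ => Q.transpose.mulVec u i)
                   0 (Matrix.of fun _ _ => p))
    (Qbar Sbar Rbar : Matrix (Fin k ⊕ Unit) (Fin k ⊕ Unit) ℝ)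
    (hQbar : Qbar.transpose * Qbar = 1)
    (hRbar : Rbar.transpose * Rbar = 1)
    (hSVD : Ybar = Qbar * Sbar * Rbar.transpose)
    (Q' : Matrix (Fin m) (Fin k ⊕ Unit) ℝ)
    (hQ' : Q' = (Matrix.of fun (i : Fin m) (j : Fin k ⊕ Unit) =>
                   Sum.elim (fun a => Q i a) (fun _ => et i) j) * Qbar)
    (R' : Matrix (Fin ℓ ⊕ Unit) (Fin k ⊕ Unit) ℝ)
    (hR' : R' = Matrix.fromBlocks R 0 0 1 * Rbar) :
    Q' * Sbar * R'.transpose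
        = Matrix.of (fun (i : Fin m) (j : Fin ℓ ⊕ Unit) =>
            Sum.elim (fun jl => (Q * S * R.transpose) i jl) (fun _ => u i) j)
    ∧ Q'.transpose * Q' = 1
    ∧ R'.transpose * R' = 1 := by
  have hpne : p ≠ 0 := ne_of_gt hppos
  have hQe : Q.transpose.mulVec e = 0 := by
    rw [he, Matrix.mulVec_sub, Matrix.mulVec_mulVec, hQ, Matrix.one_mulVec, sub_self]
  have hee : e ⬝ᵥ e = p ^ 2 := by
    have h0 : (0:ℝ) ≤ e ⬝ᵥ e := Finset.sum_nonneg fun i _ => mul_self_nonneg _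
    rw [hp, Real.sq_sqrt h0]
  set E : Matrix (Fin m) (Fin k ⊕ Unit) ℝ :=
    Matrix.of fun (i : Fin m) (j : Fin k ⊕ Unit) =>
      Sum.elim (fun a => Q i a) (fun _ => et i) j with hE
  have hEE : E.transpose * E = 1 := by
    ext x y
    cases x with
    | inl a =>
      cases y with
      | inl b =>
        have h := congrFun (congrFun hQ a) b
        simpa [hE, Matrix.mul_apply, Matrix.one_apply] using h
      | inr b =>
        have h := congrFun hQe a
        simp only [Matrix.mulVec, dotProduct, Pi.zero_apply] at h
        simp only [hE, Matrix.mul_apply, Matrix.one_apply, het, Matrix.transpose_apply,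
          Matrix.of_apply, Sum.elim_inl, Sum.elim_inr, Pi.smul_apply, smul_eq_mul,
          Sum.inl.injEq, reduceCtorEq, if_false]
        have h2 : (∑ x, Q x a * (p⁻¹ * e x)) = p⁻¹ * ∑ x, Q x a * e x := by
          rw [Finset.mul_sum]; exact Finset.sum_congr rfl fun x _ => by ring
        have h3 : (∑ x, Q x a * e x) = 0 := by
          simpa [Matrix.transpose_apply] using h
        simp [h2, h3]
    | inr a =>
      cases y with
      | inl b =>
        have h := congrFun hQe b
        simp only [Matrix.mulVec, dotProduct, Pi.zero_apply] at h
        simp only [hE, Matrix.mul_apply, Matrix.one_apply, het, Matrix.transpose_apply,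
          Matrix.of_apply, Sum.elim_inl, Sum.elim_inr, Pi.smul_apply, smul_eq_mul,
          Sum.inr.injEq, reduceCtorEq, if_false]
        have h2 : (∑ x, p⁻¹ * e x * Q x b) = p⁻¹ * ∑ x, Q x b * e x := by
          rw [Finset.mul_sum]; exact Finset.sum_congr rfl fun x _ => by ring
        have h3 : (∑ x, Q x b * e x) = 0 := by
          simpa [Matrix.transpose_apply] using h
        simp [h2, h3]
      | inr b =>
        have hsum : ∑ i, (p⁻¹ * e i) * (p⁻¹ * e i) = 1 := by
          have h1 : ∀ i : Fin m, (p⁻¹ * e i) * (p⁻¹ * e i) = p⁻¹ * p⁻¹ * (e i * e i) :=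
            fun i => by ring
          rw [Finset.sum_congr rfl (fun i _ => h1 i), ← Finset.mul_sum]
          have h2 : (∑ i, e i * e i) = p ^ 2 := hee
          rw [h2]
          field_simp
        simp [hE, Matrix.mul_apply, Matrix.one_apply, het, hsum]
  refine ⟨?_, ?_, ?_⟩
  · have key : Q' * Sbar * R'.transpose =
        E * Ybar * (Matrix.fromBlocks R 0 0 1 : Matrix (Fin ℓ ⊕ Unit) (Fin k ⊕ Unit) ℝ).transpose := by
      have hR2 : R' = (Matrix.fromBlocks R 0 0 1 : Matrix (Fin ℓ ⊕ Unit) (Fin k ⊕ Unit) ℝ) * Rbar := hR'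
      rw [hQ', hR2, Matrix.transpose_mul, hSVD]
      simp only [Matrix.mul_assoc]
    rw [key]
    ext i j
    cases j with
    | inl b =>
      simp [hY, hE, Matrix.mul_apply, Fintype.sum_sum_type, Matrix.fromBlocks_transpose,
        Finset.sum_mul, Finset.mul_sum, mul_assoc]
    | inr b =>
      have h1 : et i * p = e i := by rw [het]; simp; field_simp
      simp [hY, hE, Matrix.mul_apply, Fintype.sum_sum_type, Matrix.fromBlocks_transpose]
      have h2 : (∑ x : Fin k, Q i x * (Q.transpose.mulVec u) x)
          = Q.mulVec (Q.transpose.mulVec u) i := rfl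
      rw [h2, h1, he]
      simp
  · rw [hQ', Matrix.transpose_mul, Matrix.mul_assoc, ← Matrix.mul_assoc E.transpose,
      hEE, Matrix.one_mul, hQbar]
  · have hF : R' = (Matrix.fromBlocks R 0 0 1 : Matrix (Fin ℓ ⊕ Unit) (Fin k ⊕ Unit) ℝ) * Rbar := hR'
    set F : Matrix (Fin ℓ ⊕ Unit) (Fin k ⊕ Unit) ℝ := Matrix.fromBlocks R 0 0 1 with hFdef
    have hFF : F.transpose * F = 1 := by
      rw [hFdef, Matrix.fromBlocks_transpose, Matrix.fromBlocks_multiply]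
      simp [hR, ← Matrix.fromBlocks_one]
    rw [hF, Matrix.transpose_mul, Matrix.mul_assoc,
      ← Matrix.mul_assoc F.transpose, hFF, Matrix.one_mul, hRbar]
end

section
/- Let Q ∈ ℝ^{m×k} and R ∈ ℝ^{ℓ×k} have orthonormal columns, Σ ∈ ℝ^{k×k}, and let u_1, ..., u_s ∈ ℝ^m. Form Y = [Σ | Q^T u_1 | ... | Q^T u_s] ∈ ℝ^{k×(k+s)} and let Y = Q_Y Σ_Y R_Y^T be a thin SVD of Y. Write R_Y = [R_Y^{(1)}; R_Y^{(2)}] with R_Y^{(1)} ∈ ℝ^{k×k}. Then (Q Q_Y) Σ_Y [R R_Y^{(1)}; R_Y^{(2)}]^T = [Q Σ R^T | Q Q^T u_1 | ... | Q Q^T u_s], i.e., the updated factorization exactly represents the matrix obtained by appending the projections of the new columns. -/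
open Matrix

/-- Exact incremental SVD "p-truncation" update: with
    Y = [Σ | Qᵀu₁ | ... | Qᵀu_s] = Q_Y Σ_Y R_Yᵀ (thin SVD) and
    R_Y = [R_Y⁽¹⁾; R_Y⁽²⁾], the updated factorization
    (QQ_Y)·Σ_Y·[R R_Y⁽¹⁾; R_Y⁽²⁾]ᵀ equals [QΣRᵀ | QQᵀu₁ | ... | QQᵀu_s]. -/
theorem isvd_p_truncation_update
    (m k ℓ s : ℕ)
    (Q : Matrix (Fin m) (Fin k) ℝ)
    (S : Matrix (Fin k) (Fin k) ℝ)
    (R : Matrix (Fin ℓ) (Fin k) ℝ)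
    (hQ : Q.transpose * Q = 1) (hR : R.transpose * R = 1)
    (u : Fin s → Fin m → ℝ)
    (Y : Matrix (Fin k) (Fin k ⊕ Fin s) ℝ)
    (hY : Y = Matrix.of (fun (i : Fin k) (j : Fin k ⊕ Fin s) =>
            Sum.elim (fun a => S i a) (fun b => Q.transpose.mulVec (u b) i) j))
    (QY SY : Matrix (Fin k) (Fin k) ℝ)
    (RY : Matrix (Fin k ⊕ Fin s) (Fin k) ℝ)
    (hQY : QY.transpose * QY = 1)
    (hRY : RY.transpose * RY = 1)
    (hSVD : Y = QY * SY * RY.transpose)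
    (RY1 : Matrix (Fin ℓ) (Fin k) ℝ)
    (hRY1 : RY1 = R * Matrix.of (fun (i : Fin k) (a : Fin k) => RY (Sum.inl i) a))
    (R' : Matrix (Fin ℓ ⊕ Fin s) (Fin k) ℝ)
    (hR' : R' = Matrix.of (fun (i : Fin ℓ ⊕ Fin s) (a : Fin k) =>
            Sum.elim (fun j => RY1 j a) (fun b => RY (Sum.inr b) a) i)) :
    (Q * QY) * SY * R'.transpose
      = Matrix.of (fun (i : Fin m) (j : Fin ℓ ⊕ Fin s) =>
          Sum.elim (fun jl => (Q * S * R.transpose) i jl)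
            (fun b => Q.mulVec (Q.transpose.mulVec (u b)) i) j) := by
  have hE : R'.transpose = RY.transpose * (Matrix.fromBlocks R.transpose 0 0 1 : Matrix (Fin k ⊕ Fin s) (Fin ℓ ⊕ Fin s) ℝ) := by
    ext c d
    cases d with
    | inl jl =>
      simp [hR', hRY1, Matrix.mul_apply, Matrix.fromBlocks,
        Fintype.sum_sum_type, mul_comm]
    | inr b =>
      simp [hR', Matrix.mul_apply, Matrix.fromBlocks, Fintype.sum_sum_type,
        Matrix.one_apply, mul_ite, Finset.sum_ite_eq']
  have key : (Q * QY) * SY * R'.transpose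
      = Q * Y * (Matrix.fromBlocks R.transpose 0 0 1 : Matrix (Fin k ⊕ Fin s) (Fin ℓ ⊕ Fin s) ℝ) := by
    rw [hE, hSVD]; simp only [Matrix.mul_assoc]
  rw [key]
  ext i j
  cases j with
  | inl jl =>
    simp only [Matrix.of_apply, Sum.elim_inl, hY, Matrix.mul_apply,
      Matrix.fromBlocks_apply₁₁, Matrix.fromBlocks_apply₂₁, Fintype.sum_sum_type,
      Matrix.transpose_apply, Matrix.zero_apply, mul_zero, Finset.sum_const_zero,
      add_zero]
  | inr b =>
    simp only [Matrix.of_apply, Sum.elim_inr, hY, Matrix.mul_apply,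
      Matrix.fromBlocks_apply₁₂, Matrix.fromBlocks_apply₂₂, Fintype.sum_sum_type,
      Matrix.transpose_apply, Matrix.zero_apply, mul_zero, Finset.sum_const_zero,
      zero_add, Matrix.one_apply, Matrix.mulVec, dotProduct]
    simp [Finset.mul_sum, Finset.sum_ite_eq', mul_comm]
end
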